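/- Symmetry of nominal equality: if ∇ ⊢ t₁ ≈ t₂ then ∇ ⊢ t₂ ≈ t₁. -/

import Mathlib

abbrev Atom := ℕ
abbrev Var := ℕ
abbrev Perm := List (Atom × Atom)

def swap (p : Atom × Atom) (a : Atom) : Atom :=
  if a = p.1 then p.2 else if a = p.2 then p.1 else a

def permAtom : Perm → Atom → Atom
  | [], a => a
  | p :: π, a => swap p (permAtom π a)

def ds (π π' : Perm) : Set Atom := {a | permAtom π a ≠ permAtom π' a}

inductive Trm : Type
  | unit : Trm
  | pair : Trm → Trm → Trm
  | fn : ℕ → Trm → Trm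
  | atom : Atom → Trm
  | abs : Atom → Trm → Trm
  | susp : Perm → Var → Trm

def permTrm (π : Perm) : Trm → Trm
  | .unit => .unit
  | .pair t₁ t₂ => .pair (permTrm π t₁) (permTrm π t₂)
  | .fn f t => .fn f (permTrm π t)
  | .atom a => .atom (permAtom π a)
  | .abs a t => .abs (permAtom π a) (permTrm π t)
  | .susp π' X => .susp (π ++ π') X

abbrev Env := Set (Atom × Var)

inductive fresh (Γ : Env) (a : Atom) : Trm → Prop
  | unit : fresh Γ a .unit
  | pair {t₁ t₂} : fresh Γ a t₁ → fresh Γ a t₂ → fresh Γ a (.pair t₁ t₂)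
  | fn {f t} : fresh Γ a t → fresh Γ a (.fn f t)
  | abs₁ {t} : fresh Γ a (.abs a t)
  | abs₂ {b t} : a ≠ b → fresh Γ a t → fresh Γ a (.abs b t)
  | atom {b} : a ≠ b → fresh Γ a (.atom b)
  | susp {π X} : (permAtom π.reverse a, X) ∈ Γ → fresh Γ a (.susp π X)

inductive equ (Γ : Env) : Trm → Trm → Prop
  | unit : equ Γ .unit .unit
  | pair {t₁ t₂ s₁ s₂} : equ Γ t₁ t₂ → equ Γ s₁ s₂ → equ Γ (.pair t₁ s₁) (.pair t₂ s₂)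
  | fn {f t₁ t₂} : equ Γ t₁ t₂ → equ Γ (.fn f t₁) (.fn f t₂)
  | abs₁ {a t₁ t₂} : equ Γ t₁ t₂ → equ Γ (.abs a t₁) (.abs a t₂)
  | abs₂ {a b t₁ t₂} : a ≠ b → fresh Γ a t₂ → equ Γ t₁ (permTrm [(a, b)] t₂) →
      equ Γ (.abs a t₁) (.abs b t₂)
  | atom {a} : equ Γ (.atom a) (.atom a)
  | susp {π π' X} : (∀ c ∈ ds π π', (c, X) ∈ Γ) → equ Γ (.susp π X) (.susp π' X)

inductive weak : Trm → Trm → Prop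
  | unit : weak .unit .unit
  | atom {a} : weak (.atom a) (.atom a)
  | fn {f t t'} : weak t t' → weak (.fn f t) (.fn f t')
  | pair {t₁ t₂ s₁ s₂} : weak t₁ s₁ → weak t₂ s₂ → weak (.pair t₁ t₂) (.pair s₁ s₂)
  | abs {a t t'} : weak t t' → weak (.abs a t) (.abs a t')
  | susp {π π' X} : ds π π' = ∅ → weak (.susp π X) (.susp π' X)

def subst (σ : Var → Option Trm) : Trm → Trm
  | .unit => .unit
  | .pair t₁ t₂ => .pair (subst σ t₁) (subst σ t₂)
  | .fn f t => .fn f (subst σ t)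
  | .atom a => .atom a
  | .abs a t => .abs a (subst σ t)
  | .susp π X =>
      match σ X with
      | some t => permTrm π t
      | none => .susp π X

theorem swap_swap (p : Atom × Atom) (a : Atom) : swap p (swap p a) = a := by
  unfold swap; split_ifs <;> first | omega | trivial | simp_all

theorem permAtom_append (π ρ : Perm) (a : Atom) :
    permAtom (π ++ ρ) a = permAtom π (permAtom ρ a) := by
  induction π with
  | nil => rfl
  | cons p π ih => simp [permAtom, ih]

theorem permAtom_reverse_left (π : Perm) (a : Atom) :
    permAtom π.reverse (permAtom π a) = a := by
  induction π generalizing a with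
  | nil => rfl
  | cons p π ih =>
    simp [permAtom, List.reverse_cons, permAtom_append, swap_swap, ih]

theorem permAtom_reverse_right (π : Perm) (a : Atom) :
    permAtom π (permAtom π.reverse a) = a := by
  induction π generalizing a with
  | nil => rfl
  | cons p π ih =>
    simp [permAtom, List.reverse_cons, permAtom_append, ih, swap_swap]

theorem permAtom_inj (π : Perm) {a b : Atom} (h : permAtom π a = permAtom π b) :
    a = b := by
  have := congrArg (permAtom π.reverse) h
  simpa [permAtom_reverse_left] using this

theorem permAtom_reverse_eq {π π' : Perm} (h : ∀ a, permAtom π a = permAtom π' a)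
    (a : Atom) : permAtom π.reverse a = permAtom π'.reverse a := by
  apply permAtom_inj π
  rw [permAtom_reverse_right, h, permAtom_reverse_right]

theorem permAtom_swap (π : Perm) (a b c : Atom) :
    permAtom π (swap (a, b) c) = swap (permAtom π a, permAtom π b) (permAtom π c) := by
  unfold swap
  simp only
  rcases eq_or_ne c a with rfl | h1
  · simp
  · rw [if_neg h1, if_neg (fun h => h1 (permAtom_inj π h))]
    rcases eq_or_ne c b with rfl | h2
    · simp
    · rw [if_neg h2, if_neg (fun h => h2 (permAtom_inj π h))]

theorem permTrm_nil (t : Trm) : permTrm [] t = t := by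
  induction t <;> simp_all [permTrm, permAtom]

theorem permTrm_append (π ρ : Perm) (t : Trm) :
    permTrm (π ++ ρ) t = permTrm π (permTrm ρ t) := by
  induction t <;> simp_all [permTrm, permAtom_append]

theorem fresh_perm {Γ : Env} {a : Atom} {t : Trm} (π : Perm) (h : fresh Γ a t) :
    fresh Γ (permAtom π a) (permTrm π t) := by
  induction h with
  | unit => exact .unit
  | pair _ _ ih1 ih2 => exact .pair ih1 ih2
  | fn _ ih => exact .fn ih
  | abs₁ => exact .abs₁
  | abs₂ hne _ ih => exact .abs₂ (fun h => hne (permAtom_inj π h)) ih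
  | atom hne => exact .atom (fun h => hne (permAtom_inj π h))
  | susp hmem =>
    apply fresh.susp
    rw [List.reverse_append, permAtom_append, permAtom_reverse_left]
    exact hmem

theorem fresh_congr {Γ : Env} {c : Atom} {π π' : Perm}
    (hpe : ∀ a, permAtom π a = permAtom π' a) :
    ∀ t, fresh Γ c (permTrm π t) → fresh Γ c (permTrm π' t) := by
  intro t
  induction t with
  | unit => exact fun h => h
  | pair t1 t2 ih1 ih2 =>
    intro h; cases h with
    | pair h1 h2 => exact .pair (ih1 h1) (ih2 h2)
  | fn f t ih =>
    intro h; cases h with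
    | fn h1 => exact .fn (ih h1)
  | atom a =>
    intro h; cases h with
    | atom hne => exact .atom (by rw [← hpe]; exact hne)
  | abs a t ih =>
    intro h; cases h with
    | abs₁ => rw [permTrm, ← hpe]; exact .abs₁
    | abs₂ hne h1 => exact .abs₂ (by rw [← hpe]; exact hne) (ih h1)
  | susp ρ X =>
    intro h; cases h with
    | susp hmem =>
      apply fresh.susp
      rw [List.reverse_append, permAtom_append,
        ← permAtom_reverse_eq hpe]
      rw [List.reverse_append, permAtom_append] at hmem
      exact hmem

theorem equ_right_congr {Γ : Env} :
    ∀ (t : Trm) (π π' : Perm), (∀ a, permAtom π a = permAtom π' a) →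
    ∀ s, equ Γ s (permTrm π t) → equ Γ s (permTrm π' t) := by
  intro t
  induction t with
  | unit => intro _ _ _ _ h; exact h
  | pair t1 t2 ih1 ih2 =>
    intro π π' hpe s h; cases h with
    | pair h1 h2 => exact .pair (ih1 π π' hpe _ h1) (ih2 π π' hpe _ h2)
  | fn f t ih =>
    intro π π' hpe s h; cases h with
    | fn h1 => exact .fn (ih π π' hpe _ h1)
  | atom a =>
    intro π π' hpe s h; cases h with
    | atom => rw [permTrm, ← hpe]; exact .atom
  | abs a t ih =>
    intro π π' hpe s h; cases h with
    | abs₁ h1 => rw [permTrm, ← hpe]; exact .abs₁ (ih π π' hpe _ h1)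
    | abs₂ hne hf h1 =>
      rw [permTrm, ← hpe]
      refine .abs₂ hne (fresh_congr hpe t hf) ?_
      rw [← permTrm_append] at h1 ⊢
      refine ih _ _ (fun x => ?_) _ h1
      rw [permAtom_append, permAtom_append]
      simp only [permAtom]
      rw [hpe x]
  | susp ρ X =>
    intro π π' hpe s h; cases h with
    | susp hds =>
      apply equ.susp
      intro c hc
      apply hds
      simpa only [ds, Set.mem_setOf_eq, permAtom_append, ← hpe] using hc

theorem equ_left_congr {Γ : Env} :
    ∀ (t : Trm) (π π' : Perm), (∀ a, permAtom π a = permAtom π' a) →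
    ∀ s, equ Γ (permTrm π t) s → equ Γ (permTrm π' t) s := by
  intro t
  induction t with
  | unit => intro _ _ _ _ h; exact h
  | pair t1 t2 ih1 ih2 =>
    intro π π' hpe s h; cases h with
    | pair h1 h2 => exact .pair (ih1 π π' hpe _ h1) (ih2 π π' hpe _ h2)
  | fn f t ih =>
    intro π π' hpe s h; cases h with
    | fn h1 => exact .fn (ih π π' hpe _ h1)
  | atom a =>
    intro π π' hpe s h; cases h with
    | atom => rw [permTrm, ← hpe]; exact .atom
  | abs a t ih =>
    intro π π' hpe s h; cases h with
    | abs₁ h1 => rw [permTrm, ← hpe]; exact .abs₁ (ih π π' hpe _ h1)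
    | abs₂ hne hf h1 =>
      rw [permTrm]
      rw [← hpe]
      exact .abs₂ hne hf (ih π π' hpe _ h1)
  | susp ρ X =>
    intro π π' hpe s h; cases h with
    | susp hds =>
      apply equ.susp
      intro c hc
      apply hds
      simpa only [ds, Set.mem_setOf_eq, permAtom_append, hpe] using hc

theorem equ_perm {Γ : Env} {t s : Trm} (π : Perm) (h : equ Γ t s) :
    equ Γ (permTrm π t) (permTrm π s) := by
  induction h with
  | unit => exact .unit
  | pair _ _ ih1 ih2 => exact .pair ih1 ih2
  | fn _ ih => exact .fn ih
  | abs₁ _ ih => exact .abs₁ ih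
  | atom => exact .atom
  | susp hds =>
    apply equ.susp
    intro c hc
    apply hds
    simp only [ds, Set.mem_setOf_eq, permAtom_append] at hc ⊢
    exact fun h => hc (by rw [h])
  | @abs₂ a b u₁ u₂ hne hf _ ih =>
    refine .abs₂ (fun h => hne (permAtom_inj π h)) (fresh_perm π hf) ?_
    rw [← permTrm_append] at ih
    rw [← permTrm_append]
    refine equ_right_congr u₂ (π ++ [(a, b)]) ([(permAtom π a, permAtom π b)] ++ π)
      (fun x => ?_) _ ih
    rw [permAtom_append, permAtom_append]
    simp only [permAtom]
    exact permAtom_swap π a b x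

theorem fresh_equ {Γ : Env} {u v : Trm} (h : equ Γ u v) :
    ∀ c, fresh Γ c v → fresh Γ c u := by
  induction h with
  | unit => exact fun _ h => h
  | pair _ _ ih1 ih2 =>
    intro c hf; cases hf with
    | pair h1 h2 => exact .pair (ih1 c h1) (ih2 c h2)
  | fn _ ih =>
    intro c hf; cases hf with
    | fn h1 => exact .fn (ih c h1)
  | atom => exact fun _ h => h
  | abs₁ _ ih =>
    intro c hf; cases hf with
    | abs₁ => exact .abs₁
    | abs₂ hne h1 => exact .abs₂ hne (ih c h1)
  | @abs₂ a b u₁ u₂ hne hf _ ih =>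
    intro c hfc
    rcases eq_or_ne c a with rfl | hca
    · exact .abs₁
    refine .abs₂ hca ?_
    rcases eq_or_ne c b with rfl | hcb
    · apply ih
      have := fresh_perm [(a, c)] hf
      simpa only [permAtom, swap, if_pos rfl, ite_true] using this
    · cases hfc with
      | abs₁ => exact absurd rfl hcb
      | abs₂ _ h1 =>
        apply ih
        have := fresh_perm [(a, b)] h1
        simpa only [permAtom, swap, if_neg hca, if_neg hcb, hca, hcb, ite_false] using this
  | @susp π π' X hds =>
    intro c hf; cases hf with
    | susp hmem =>
      apply fresh.susp
      by_cases h : permAtom π (permAtom π.reverse c) = permAtom π' (permAtom π.reverse c)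
      · have : permAtom π'.reverse c = permAtom π.reverse c := by
          apply permAtom_inj π'
          rw [permAtom_reverse_right, ← h, permAtom_reverse_right]
        rwa [this] at hmem
      · exact hds _ h

theorem equ_symm (Γ : Env) (t₁ t₂ : Trm)
    (h : equ Γ t₁ t₂) : equ Γ t₂ t₁ := by
  induction h with
  | unit => exact .unit
  | pair _ _ ih1 ih2 => exact .pair ih1 ih2
  | fn _ ih => exact .fn ih
  | abs₁ _ ih => exact .abs₁ ih
  | atom => exact .atom
  | susp hds =>
    apply equ.susp
    intro c hc
    exact hds c (Ne.symm hc)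
  | @abs₂ a b u₁ u₂ hne hf h ih =>
    refine .abs₂ (Ne.symm hne) ?_ ?_
    · -- fresh Γ b u₁
      apply fresh_equ h
      have := fresh_perm [(a, b)] hf
      simpa only [permAtom, swap, if_pos rfl, ite_true] using this
    · -- equ Γ u₂ (permTrm [(b,a)] u₁)
      have h2 := equ_perm [(b, a)] ih
      rw [← permTrm_append] at h2
      have h3 := equ_left_congr u₂ ([(b, a)] ++ [(a, b)]) [] (fun x => by
        simp only [permAtom_append, permAtom, swap]
        by_cases hxa : x = a <;> by_cases hxb : x = b <;> simp [hxa, hxb, hne, Ne.symm hne]) _ h2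
      rwa [permTrm_nil] at h3
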